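/- Let (X, 𝒜, μ) be a measure space and f, g zero-divisors. There exists a zero-divisor h with μ(Z(f) ∩ Z(h)) = 0 and μ(Z(g) ∩ Z(h)) = 0 if and only if μ((X \ Z(f)) ∩ (X \ Z(g))) > 0. -/

import Mathlib

open MeasureTheory Set

/-- `f` is a zero-divisor in the ring of measurable functions. -/
def IsZeroDiv {X : Type*} [MeasurableSpace X] (μ : Measure X) (f : X → ℝ) : Prop :=
  Measurable f ∧ 0 < μ {x | f x = 0} ∧ 0 < μ {x | f x = 0}ᶜ

theorem common_neighbor_iff {X : Type*} [MeasurableSpace X] (μ : Measure X)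
    (hμ : 0 < μ Set.univ) (f g : X → ℝ)
    (hf : IsZeroDiv μ f) (hg : IsZeroDiv μ g) :
    (∃ h : X → ℝ, IsZeroDiv μ h ∧ μ ({x | f x = 0} ∩ {x | h x = 0}) = 0 ∧
        μ ({x | g x = 0} ∩ {x | h x = 0}) = 0) ↔
      0 < μ ({x | f x = 0}ᶜ ∩ {x | g x = 0}ᶜ) := by
  set A := {x | f x = 0} with hA
  set B := {x | g x = 0} with hB
  have hAm : MeasurableSet A := hf.1 (measurableSet_singleton 0)
  have hBm : MeasurableSet B := hg.1 (measurableSet_singleton 0)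
  constructor
  · rintro ⟨h, ⟨hhm, hh1, hh2⟩, hfh, hgh⟩
    by_contra hpos
    push_neg at hpos
    have hzero : μ (Aᶜ ∩ Bᶜ) = 0 := le_antisymm hpos zero_le
    have hsub : {x | h x = 0} ⊆ (A ∩ {x | h x = 0}) ∪ (B ∩ {x | h x = 0}) ∪ (Aᶜ ∩ Bᶜ) := by
      intro x hx
      by_cases hxa : x ∈ A
      · exact Or.inl (Or.inl ⟨hxa, hx⟩)
      by_cases hxb : x ∈ B
      · exact Or.inl (Or.inr ⟨hxb, hx⟩)
      · exact Or.inr ⟨hxa, hxb⟩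
    have : μ {x | h x = 0} = 0 := by
      refine le_antisymm ?_ zero_le
      calc μ {x | h x = 0} ≤ μ ((A ∩ {x | h x = 0}) ∪ (B ∩ {x | h x = 0}) ∪ (Aᶜ ∩ Bᶜ)) :=
            measure_mono hsub
        _ ≤ μ ((A ∩ {x | h x = 0}) ∪ (B ∩ {x | h x = 0})) + μ (Aᶜ ∩ Bᶜ) := measure_union_le _ _
        _ ≤ (μ (A ∩ {x | h x = 0}) + μ (B ∩ {x | h x = 0})) + μ (Aᶜ ∩ Bᶜ) := by
            gcongr; exact measure_union_le _ _
        _ = 0 := by rw [hfh, hgh, hzero]; simp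
    exact absurd this hh1.ne'
  · intro hpos
    refine ⟨(A ∪ B).indicator (fun _ => (1:ℝ)), ?_, ?_, ?_⟩
    · have hZ : {x | (A ∪ B).indicator (fun _ => (1:ℝ)) x = 0} = Aᶜ ∩ Bᶜ := by
        ext x
        by_cases hx : x ∈ A ∪ B
        · simp only [indicator_of_mem hx, mem_inter_iff, mem_compl_iff]
          constructor
          · norm_num
          · rintro ⟨h1, h2⟩; exact absurd hx (by simp [h1, h2])
        · rw [Set.mem_union] at hx
          simp only [mem_union, not_or] at hx
          simp [indicator_of_notMem (show x ∉ A ∪ B by simp [hx.1, hx.2]), hx.1, hx.2]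
      refine ⟨(measurable_const.indicator (hAm.union hBm)), ?_, ?_⟩
      · rw [hZ]; exact hpos
      · rw [hZ, compl_inter, compl_compl, compl_compl]
        exact lt_of_lt_of_le hf.2.1 (measure_mono subset_union_left)
    · have : A ∩ {x | (A ∪ B).indicator (fun _ => (1:ℝ)) x = 0} = ∅ := by
        ext x
        simp only [mem_inter_iff, mem_setOf_eq, mem_empty_iff_false, iff_false, not_and]
        intro hxa
        rw [indicator_of_mem (mem_union_left B hxa)]
        norm_num
      rw [this]; simp
    · have : B ∩ {x | (A ∪ B).indicator (fun _ => (1:ℝ)) x = 0} = ∅ := by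
        ext x
        simp only [mem_inter_iff, mem_setOf_eq, mem_empty_iff_false, iff_false, not_and]
        intro hxb
        rw [indicator_of_mem (mem_union_right A hxb)]
        norm_num
      rw [this]; simp
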